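/- Theorem 2 (spectrum of the single-site leakage transition matrix): let n ≥ 2, let p_1,…,p_n > 0, and let 0 ≤ q_n < q_{n−1} < ⋯ < q_1 be reals; set x_i = 1 − 2q_i and P = ∑_{i=1}^n p_i. Then: (i) det(Q(p,q) − I) = 0; (ii) for each i ∈ {1,…,n−1} there exists λ_i with x_i < λ_i < x_{i+1} and det(Q(p,q) − λ_i·I) = 0; (iii) there exists λ_0 with x_1 − P < λ_0 < min(x_1, x_n − P) and det(Q(p,q) − λ_0·I) = 0. In particular Q(p,q) has n+1 pairwise distinct real eigenvalues λ_0 < λ_1 < ⋯ < λ_{n−1} < 1. -/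

import Mathlib

open Matrix Finset

noncomputable section

/-- The (n+1)×(n+1) single-site leakage transition matrix Q(p,q): rows and columns
indexed by 0,1,…,n, with Q₀₀ = 1 − ∑ᵢ pᵢ, Q₀ᵢ = 2qᵢ, Qᵢ₀ = pᵢ, Qᵢᵢ = 1 − 2qᵢ and
Qᵢⱼ = 0 for distinct i, j ≥ 1. -/
def Qmat {n : ℕ} (p q : Fin n → ℝ) : Matrix (Fin (n + 1)) (Fin (n + 1)) ℝ :=
  Matrix.of fun a b =>
    Fin.cases (motive := fun _ => ℝ)
      (Fin.cases (motive := fun _ => ℝ) (1 - ∑ i, p i) (fun j => 2 * q j) b)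
      (fun i =>
        Fin.cases (motive := fun _ => ℝ) (p i)
          (fun j => if i = j then 1 - 2 * q i else 0) b)
      a



section Aux
variable {n : ℕ} (p q : Fin n → ℝ)

def xx {n : ℕ} (q : Fin n → ℝ) (i : Fin n) : ℝ := 1 - 2 * q i

def ff {n : ℕ} (p q : Fin n → ℝ) (t : ℝ) : ℝ :=
  (∏ i, (xx q i - t)) - ∑ i, p i * ∏ j ∈ Finset.univ.erase i, (xx q j - t)

lemma ff_cont {n : ℕ} (p q : Fin n → ℝ) : Continuous (ff p q) := by
  unfold ff
  apply Continuous.sub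
  · exact continuous_finset_prod _ fun i _ => by fun_prop
  · exact continuous_finset_sum _ fun i _ =>
      Continuous.mul continuous_const (continuous_finset_prod _ fun j _ => by fun_prop)

lemma det_eq {n : ℕ} (p q : Fin n → ℝ) (t : ℝ) :
    (Qmat p q - t • (1 : Matrix (Fin (n + 1)) (Fin (n + 1)) ℝ)).det = (1 - t) * ff p q t := by
  revert t
  rw [← funext_iff]
  have hdense : Dense ((Set.range (xx q))ᶜ) :=
    (Set.finite_range (xx q)).countable.dense_compl ℝ
  have hcontL : Continuous fun t : ℝ =>
      (Qmat p q - t • (1 : Matrix (Fin (n + 1)) (Fin (n + 1)) ℝ)).det := by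
    apply Continuous.matrix_det
    apply continuous_matrix
    intro i j
    simp only [Matrix.sub_apply, Matrix.smul_apply, smul_eq_mul]
    fun_prop
  have hcontR : Continuous fun t : ℝ => (1 - t) * ff p q t :=
    Continuous.mul (by fun_prop) (ff_cont p q)
  apply hcontL.ext_on hdense hcontR
  intro t ht
  have hne : ∀ i : Fin n, xx q i - t ≠ 0 := by
    intro i
    refine sub_ne_zero.2 fun h => ht ⟨i, h⟩
  set d : Fin n → ℝ := fun i => xx q i - t with hd
  let e : Fin 1 ⊕ Fin n ≃ Fin (n + 1) := finSumFinEquiv.trans (finCongr (Nat.add_comm 1 n))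
  have he0 : ∀ a : Fin 1, e (Sum.inl a) = 0 := by
    intro a
    have : (a : ℕ) = 0 := by omega
    simp [e, Fin.ext_iff, this]
  have heS : ∀ i : Fin n, e (Sum.inr i) = i.succ := by
    intro i
    simp [e, Fin.ext_iff]
    try omega
  have hsub : (Qmat p q - t • (1 : Matrix (Fin (n + 1)) (Fin (n + 1)) ℝ)).submatrix e e =
      Matrix.fromBlocks (Matrix.of fun (_ : Fin 1) (_ : Fin 1) => 1 - (∑ i, p i) - t)
        (Matrix.of fun (_ : Fin 1) (j : Fin n) => 2 * q j)
        (Matrix.of fun (i : Fin n) (_ : Fin 1) => p i)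
        (Matrix.diagonal d) := by
    ext a b
    cases a with
    | inl a =>
      cases b with
      | inl b =>
        simp [Matrix.submatrix_apply, he0, Qmat, Matrix.one_apply]
      | inr j =>
        simp [Matrix.submatrix_apply, he0, heS, Qmat, Matrix.one_apply,
          (Fin.succ_ne_zero j).symm]
    | inr i =>
      cases b with
      | inl b =>
        simp [Matrix.submatrix_apply, he0, heS, Qmat, Matrix.one_apply, Fin.succ_ne_zero i]
      | inr j =>
        by_cases h : i = j
        · subst h
          simp [Matrix.submatrix_apply, heS, Qmat, Matrix.one_apply, hd, xx]
        · simp [Matrix.submatrix_apply, heS, Qmat, Matrix.one_apply, h,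
            fun hh => h (Fin.succ_injective n hh)]
  letI ivd : Invertible d :=
    ⟨fun i => (d i)⁻¹, funext fun i => inv_mul_cancel₀ (hne i),
      funext fun i => mul_inv_cancel₀ (hne i)⟩
  letI : Invertible (Matrix.diagonal d) := Matrix.diagonalInvertible d
  show (Qmat p q - t • (1 : Matrix (Fin (n + 1)) (Fin (n + 1)) ℝ)).det = (1 - t) * ff p q t
  rw [← Matrix.det_submatrix_equiv_self e, hsub, Matrix.det_fromBlocks₂₂,
    Matrix.invOf_diagonal_eq, Matrix.det_diagonal]
  have hinvof : (⅟ d : Fin n → ℝ) = fun i => (d i)⁻¹ := rfl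
  rw [hinvof, Matrix.det_fin_one]
  simp only [Matrix.sub_apply, Matrix.mul_apply, Matrix.mul_diagonal, Matrix.of_apply,
    Matrix.diagonal_apply, mul_ite, mul_zero, Finset.sum_ite_eq', Finset.mem_univ, if_true]
  have key : ∀ j : Fin n, (∏ i, d i) * (d j)⁻¹ = ∏ i ∈ Finset.univ.erase j, d i := by
    intro j
    rw [← Finset.mul_prod_erase Finset.univ d (Finset.mem_univ j), mul_comm (d j),
      mul_assoc, mul_inv_cancel₀ (hne j), mul_one]
  have hP : (∑ i, p i) * ∏ i, d i = ∑ i, p i * (d i * ∏ j ∈ Finset.univ.erase i, d j) := by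
    rw [Finset.sum_mul]
    exact Finset.sum_congr rfl fun i _ => by
      rw [Finset.mul_prod_erase Finset.univ d (Finset.mem_univ i)]
  have h2 : ∑ i, p i * (d i * ∏ j ∈ Finset.univ.erase i, d j) =
      (1 - t) * (∑ i, p i * ∏ j ∈ Finset.univ.erase i, d j)
        - ∑ i, 2 * q i * p i * ∏ j ∈ Finset.univ.erase i, d j := by
    rw [Finset.mul_sum, ← Finset.sum_sub_distrib]
    refine Finset.sum_congr rfl fun i _ => ?_
    have : d i = 1 - 2 * q i - t := rfl
    rw [this]
    ring
  have expand : (∏ i, d i) * ((1 - (∑ i, p i) - t) - ∑ j, 2 * q j * (d j)⁻¹ * p j) =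
      (∏ i, d i) * (1 - (∑ i, p i) - t) - ∑ j, 2 * q j * p j * ∏ i ∈ Finset.univ.erase j, d i := by
    rw [mul_sub, Finset.mul_sum]
    congr 1
    exact Finset.sum_congr rfl fun j _ => by rw [← key j]; ring
  unfold ff
  rw [show (fun i => xx q i - t) = d from rfl] at *
  calc (∏ i, d i) * ((1 - (∑ i, p i) - t) - ∑ j, 2 * q j * (d j)⁻¹ * p j)
      = (∏ i, d i) * (1 - (∑ i, p i) - t)
        - ∑ j, 2 * q j * p j * ∏ i ∈ Finset.univ.erase j, d i := expand
    _ = (1 - t) * ((∏ i, d i) - ∑ i, p i * ∏ j ∈ Finset.univ.erase i, d j) := by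
        linear_combination -hP - h2

lemma hxlt (hq : ∀ i j : Fin n, i < j → q j < q i) : ∀ i j : Fin n, i < j → xx q i < xx q j := by
  intro i j hij
  have := hq i j hij
  unfold xx
  linarith

lemma ff_at_x (k : Fin n) :
    ff p q (xx q k) = -(p k * ∏ j ∈ Finset.univ.erase k, (xx q j - xx q k)) := by
  unfold ff
  rw [Finset.prod_eq_zero (Finset.mem_univ k) (by ring),
    Finset.sum_eq_single k
      (fun i _ hik => by
        rw [Finset.prod_eq_zero (Finset.mem_erase.mpr ⟨Ne.symm hik, Finset.mem_univ k⟩)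
          (by ring), mul_zero])
      (fun h => absurd (Finset.mem_univ k) h)]
  ring

lemma prod_sign (hq : ∀ i j : Fin n, i < j → q j < q i) (k : Fin n) :
    0 < (-1 : ℝ) ^ (k : ℕ) * ∏ j ∈ Finset.univ.erase k, (xx q j - xx q k) := by
  have hsplit : Finset.univ.erase k = Finset.Iio k ∪ Finset.Ioi k := by
    ext j
    simp only [Finset.mem_erase, Finset.mem_union, Finset.mem_Iio, Finset.mem_Ioi,
      Finset.mem_univ, and_true, Fin.lt_def, Fin.ext_iff]
    omega
  have hdisj : Disjoint (Finset.Iio k) (Finset.Ioi k) :=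
    Finset.disjoint_left.mpr fun a ha hb =>
      absurd (Finset.mem_Iio.mp ha) (not_lt.mpr (le_of_lt (Finset.mem_Ioi.mp hb)))
  rw [hsplit, Finset.prod_union hdisj]
  have hIio : ∏ j ∈ Finset.Iio k, (xx q j - xx q k)
      = (-1 : ℝ) ^ (k : ℕ) * ∏ j ∈ Finset.Iio k, (xx q k - xx q j) := by
    rw [← Fin.card_Iio k, ← Finset.prod_const, ← Finset.prod_mul_distrib]
    exact Finset.prod_congr rfl fun j _ => by ring
  have h1 : 0 < ∏ j ∈ Finset.Iio k, (xx q k - xx q j) :=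
    Finset.prod_pos fun j hj => sub_pos.2 (hxlt q hq j k (Finset.mem_Iio.mp hj))
  have h2 : 0 < ∏ j ∈ Finset.Ioi k, (xx q j - xx q k) :=
    Finset.prod_pos fun j hj => sub_pos.2 (hxlt q hq k j (Finset.mem_Ioi.mp hj))
  have hsq : ((-1 : ℝ) ^ (k : ℕ)) * ((-1 : ℝ) ^ (k : ℕ)) = 1 := by
    rw [← pow_add]
    exact Even.neg_one_pow ⟨k, rfl⟩
  rw [hIio]
  have hfin : (-1 : ℝ) ^ (k : ℕ) * (((-1 : ℝ) ^ (k : ℕ) * ∏ j ∈ Finset.Iio k, (xx q k - xx q j)) *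
      ∏ j ∈ Finset.Ioi k, (xx q j - xx q k)) =
      (((-1 : ℝ) ^ (k : ℕ)) * ((-1 : ℝ) ^ (k : ℕ))) *
      ((∏ j ∈ Finset.Iio k, (xx q k - xx q j)) * ∏ j ∈ Finset.Ioi k, (xx q j - xx q k)) := by
    ring
  rw [hfin, hsq, one_mul]
  exact mul_pos h1 h2

lemma ff_sign (hp : ∀ i, 0 < p i) (hq : ∀ i j : Fin n, i < j → q j < q i) (k : Fin n) : 0 < (-1 : ℝ) ^ ((k : ℕ) + 1) * ff p q (xx q k) := by
  have h := mul_pos (hp k) (prod_sign q hq k)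
  have hpr := prod_sign q hq k
  rw [ff_at_x]
  calc (0:ℝ) < p k * ((-1 : ℝ) ^ (k : ℕ) * ∏ j ∈ Finset.univ.erase k, (xx q j - xx q k)) := h
    _ = (-1 : ℝ) ^ ((k : ℕ) + 1) *
        -(p k * ∏ j ∈ Finset.univ.erase k, (xx q j - xx q k)) := by rw [pow_succ]; ring

lemma root_between (hp : ∀ i, 0 < p i) (hq : ∀ i j : Fin n, i < j → q j < q i) (k : Fin n) (hk1 : (k : ℕ) + 1 < n) :
    ∃ t : ℝ, xx q k < t ∧ t < xx q ⟨(k : ℕ) + 1, hk1⟩ ∧ ff p q t = 0 := by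
  set k1 : Fin n := ⟨(k : ℕ) + 1, hk1⟩ with hk1def
  have hklt : k < k1 := by simp [hk1def, Fin.lt_def]
  have hxk : xx q k < xx q k1 := hxlt q hq k k1 hklt
  have hs1 := ff_sign p q hp hq k
  have hs2 := ff_sign p q hp hq k1
  have hk1v : ((k1 : ℕ)) = (k : ℕ) + 1 := rfl
  rcases Nat.even_or_odd (k : ℕ) with he | ho
  · have e1 : ((-1 : ℝ) ^ ((k : ℕ) + 1)) = -1 := by
      rw [pow_succ, he.neg_one_pow, one_mul]
    obtain ⟨m, hm⟩ := he
    have e2 : ((-1 : ℝ) ^ ((k1 : ℕ) + 1)) = 1 := by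
      rw [hk1v]
      exact Even.neg_one_pow ⟨m + 1, by omega⟩
    rw [e1] at hs1; rw [e2, one_mul] at hs2
    have : (0:ℝ) ∈ Set.Ioo (ff p q (xx q k)) (ff p q (xx q k1)) := ⟨by linarith, hs2⟩
    obtain ⟨t, ht, hft⟩ := intermediate_value_Ioo (le_of_lt hxk)
      (ff_cont p q).continuousOn this
    exact ⟨t, ht.1, ht.2, hft⟩
  · obtain ⟨m, hm⟩ := ho
    have e1 : ((-1 : ℝ) ^ ((k : ℕ) + 1)) = 1 := Even.neg_one_pow ⟨m + 1, by omega⟩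
    have e2 : ((-1 : ℝ) ^ ((k1 : ℕ) + 1)) = -1 := by
      rw [hk1v, pow_succ]
      rw [Even.neg_one_pow (⟨m + 1, by omega⟩ : Even ((k : ℕ) + 1)), one_mul]
    rw [e1, one_mul] at hs1; rw [e2] at hs2
    have : (0:ℝ) ∈ Set.Ioo (ff p q (xx q k1)) (ff p q (xx q k)) := ⟨by linarith, hs1⟩
    obtain ⟨t, ht, hft⟩ := intermediate_value_Ioo' (le_of_lt hxk)
      (ff_cont p q).continuousOn this
    exact ⟨t, ht.1, ht.2, hft⟩

lemma hxle (hq : ∀ i j : Fin n, i < j → q j < q i) : ∀ i j : Fin n, i ≤ j → xx q i ≤ xx q j := by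
  intro i j hij
  rcases eq_or_lt_of_le hij with h | h
  · exact le_of_eq (by rw [h])
  · exact le_of_lt (hxlt q hq i j h)

lemma two_le_pos' {n : ℕ} (hn : 2 ≤ n) : 0 < n := by omega

lemma two_le_pred_lt' {n : ℕ} (hn : 2 ≤ n) : n - 1 < n := by omega

lemma ff_pos_at_left (hn : 2 ≤ n) (hp : ∀ i, 0 < p i) (hq : ∀ i j : Fin n, i < j → q j < q i) :
    0 < ff p q (xx q ⟨0, two_le_pos' hn⟩ - ∑ i, p i) := by
  haveI : Nonempty (Fin n) := ⟨⟨0, by omega⟩⟩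
  set i0 : Fin n := ⟨0, by omega⟩ with hi0
  set P : ℝ := ∑ i, p i with hPdef
  have hP : 0 < P := Finset.sum_pos (fun i _ => hp i) Finset.univ_nonempty
  set t : ℝ := xx q i0 - P with htdef
  have hle : ∀ i : Fin n, P ≤ xx q i - t := by
    intro i
    have : xx q i0 ≤ xx q i := hxle q hq i0 i (by simp [hi0, Fin.le_def])
    simp only [htdef]
    linarith
  have hpos : ∀ i : Fin n, 0 < xx q i - t := fun i => lt_of_lt_of_le hP (hle i)
  have hEpos : ∀ i : Fin n, 0 < ∏ j ∈ Finset.univ.erase i, (xx q j - t) :=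
    fun i => Finset.prod_pos fun j _ => hpos j
  have hA : ∏ i, (xx q i - t) = P * ∏ j ∈ Finset.univ.erase i0, (xx q j - t) := by
    rw [← Finset.mul_prod_erase Finset.univ (fun j => xx q j - t) (Finset.mem_univ i0)]
    have : xx q i0 - t = P := by simp [htdef]
    rw [this]
  have hterm : ∀ i : Fin n, p i * ∏ j ∈ Finset.univ.erase i, (xx q j - t) ≤
      p i * ∏ j ∈ Finset.univ.erase i0, (xx q j - t) := by
    intro i
    refine mul_le_mul_of_nonneg_left ?_ (le_of_lt (hp i))
    have hmul : (xx q i - t) * ∏ j ∈ Finset.univ.erase i, (xx q j - t)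
        = (xx q i0 - t) * ∏ j ∈ Finset.univ.erase i0, (xx q j - t) := by
      rw [Finset.mul_prod_erase Finset.univ (fun j => xx q j - t) (Finset.mem_univ i),
        Finset.mul_prod_erase Finset.univ (fun j => xx q j - t) (Finset.mem_univ i0)]
    have h1 : (xx q i0 - t) * ∏ j ∈ Finset.univ.erase i0, (xx q j - t)
        ≤ (xx q i - t) * ∏ j ∈ Finset.univ.erase i0, (xx q j - t) := by
      refine mul_le_mul_of_nonneg_right ?_ (le_of_lt (hEpos i0))
      have := hle i
      simp only [htdef]
      linarith
    have := hmul.le.trans h1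
    exact le_of_mul_le_mul_left this (hpos i)
  set i1 : Fin n := ⟨1, by omega⟩ with hi1
  have hstrict : p i1 * ∏ j ∈ Finset.univ.erase i1, (xx q j - t) <
      p i1 * ∏ j ∈ Finset.univ.erase i0, (xx q j - t) := by
    refine mul_lt_mul_of_pos_left ?_ (hp i1)
    have hmul : (xx q i1 - t) * ∏ j ∈ Finset.univ.erase i1, (xx q j - t)
        = (xx q i0 - t) * ∏ j ∈ Finset.univ.erase i0, (xx q j - t) := by
      rw [Finset.mul_prod_erase Finset.univ (fun j => xx q j - t) (Finset.mem_univ i1),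
        Finset.mul_prod_erase Finset.univ (fun j => xx q j - t) (Finset.mem_univ i0)]
    have hlt01 : xx q i0 - t < xx q i1 - t := by
      have : xx q i0 < xx q i1 := hxlt q hq i0 i1 (by simp [hi0, hi1, Fin.lt_def])
      linarith
    have h1 : (xx q i0 - t) * ∏ j ∈ Finset.univ.erase i0, (xx q j - t)
        < (xx q i1 - t) * ∏ j ∈ Finset.univ.erase i0, (xx q j - t) :=
      mul_lt_mul_of_pos_right hlt01 (hEpos i0)
    have := hmul.trans_lt h1
    exact lt_of_mul_lt_mul_left this (le_of_lt (hpos i1))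
  have hsum : ∑ i, p i * ∏ j ∈ Finset.univ.erase i, (xx q j - t)
      < ∑ i, p i * ∏ j ∈ Finset.univ.erase i0, (xx q j - t) :=
    Finset.sum_lt_sum (fun i _ => hterm i) ⟨i1, Finset.mem_univ i1, hstrict⟩
  have hsum2 : ∑ i, p i * ∏ j ∈ Finset.univ.erase i0, (xx q j - t)
      = P * ∏ j ∈ Finset.univ.erase i0, (xx q j - t) := by
    rw [hPdef, Finset.sum_mul]
  unfold ff
  rw [hA]
  rw [hsum2] at hsum
  linarith

lemma ff_far (hn : 2 ≤ n) (hp : ∀ i, 0 < p i) (hq : ∀ i j : Fin n, i < j → q j < q i)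
    (t : ℝ) (hft : ff p q t = 0) (htlt : t < xx q ⟨0, two_le_pos' hn⟩) :
    t < xx q ⟨n - 1, two_le_pred_lt' hn⟩ - ∑ i, p i := by
  haveI : Nonempty (Fin n) := ⟨⟨0, by omega⟩⟩
  set i0 : Fin n := ⟨0, by omega⟩ with hi0
  set iL : Fin n := ⟨n - 1, by omega⟩ with hiL
  set P : ℝ := ∑ i, p i with hPdef
  have hpos : ∀ i : Fin n, 0 < xx q i - t := by
    intro i
    have : xx q i0 ≤ xx q i := hxle q hq i0 i (by simp [hi0, Fin.le_def])
    linarith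
  have hEpos : ∀ i : Fin n, 0 < ∏ j ∈ Finset.univ.erase i, (xx q j - t) :=
    fun i => Finset.prod_pos fun j _ => hpos j
  have hA0 : 0 < ∏ i, (xx q i - t) := Finset.prod_pos fun i _ => hpos i
  have hmul : ∀ i : Fin n, (xx q i - t) * ∏ j ∈ Finset.univ.erase i, (xx q j - t)
      = ∏ i, (xx q i - t) :=
    fun i => Finset.mul_prod_erase Finset.univ (fun j => xx q j - t) (Finset.mem_univ i)
  have hAeq : ∏ i, (xx q i - t) = ∑ i, p i * ∏ j ∈ Finset.univ.erase i, (xx q j - t) := by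
    have := hft
    unfold ff at this
    linarith
  have hxiL : ∀ i : Fin n, xx q i ≤ xx q iL := by
    intro i
    refine hxle q hq i iL ?_
    simp only [hiL, Fin.le_def]
    omega
  have hkey : P * ∏ i, (xx q i - t) < (xx q iL - t) * ∏ i, (xx q i - t) := by
    calc P * ∏ i, (xx q i - t)
        = ∑ i, p i * ∏ i', (xx q i' - t) := by rw [hPdef, Finset.sum_mul]
      _ = ∑ i, p i * ((xx q i - t) * ∏ j ∈ Finset.univ.erase i, (xx q j - t)) := by
          exact Finset.sum_congr rfl fun i _ => by rw [hmul i]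
      _ < ∑ i, p i * ((xx q iL - t) * ∏ j ∈ Finset.univ.erase i, (xx q j - t)) := by
          refine Finset.sum_lt_sum (fun i _ => ?_) ⟨i0, Finset.mem_univ i0, ?_⟩
          · refine mul_le_mul_of_nonneg_left
              (mul_le_mul_of_nonneg_right (by have := hxiL i; linarith)
                (le_of_lt (hEpos i))) (le_of_lt (hp i))
          · refine mul_lt_mul_of_pos_left
              (mul_lt_mul_of_pos_right ?_ (hEpos i0)) (hp i0)
            have : xx q i0 < xx q iL := by
              refine hxlt q hq i0 iL ?_
              simp only [hi0, hiL, Fin.lt_def]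
              omega
            linarith
      _ = (xx q iL - t) * ∑ i, p i * ∏ j ∈ Finset.univ.erase i, (xx q j - t) := by
          rw [Finset.mul_sum]
          exact Finset.sum_congr rfl fun i _ => by ring
      _ = (xx q iL - t) * ∏ i, (xx q i - t) := by rw [← hAeq]
  have := (mul_lt_mul_iff_left₀ hA0).mp hkey
  linarith

end Aux

/-- Theorem 2 (spectrum of the single-site leakage transition matrix): with
pᵢ > 0, 0 ≤ qₙ < ⋯ < q₁, xᵢ = 1 − 2qᵢ and P = ∑ᵢ pᵢ, the matrix Q(p,q) has
eigenvalue 1, an eigenvalue in each interval (xᵢ, xᵢ₊₁), and an eigenvalue in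
(x₁ − P, min(x₁, xₙ − P)); in particular it has n+1 pairwise distinct real
eigenvalues λ₀ < λ₁ < ⋯ < λ_{n−1} < 1. -/
theorem single_site_leakage_spectrum (n : ℕ) (hn : 2 ≤ n) (p q : Fin n → ℝ)
    (hp : ∀ i, 0 < p i)
    (hq : ∀ i j : Fin n, i < j → q j < q i)
    (hq0 : 0 ≤ q ⟨n - 1, by omega⟩) :
    (Qmat p q - (1 : ℝ) • (1 : Matrix (Fin (n + 1)) (Fin (n + 1)) ℝ)).det = 0 ∧
    (∀ (i : Fin n) (h : (i : ℕ) + 1 < n),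
      ∃ lam : ℝ, 1 - 2 * q i < lam ∧ lam < 1 - 2 * q ⟨(i : ℕ) + 1, h⟩ ∧
        (Qmat p q - lam • (1 : Matrix (Fin (n + 1)) (Fin (n + 1)) ℝ)).det = 0) ∧
    (∃ lam : ℝ,
      (1 - 2 * q ⟨0, by omega⟩) - (∑ i, p i) < lam ∧
      lam < min (1 - 2 * q ⟨0, by omega⟩) ((1 - 2 * q ⟨n - 1, by omega⟩) - ∑ i, p i) ∧
      (Qmat p q - lam • (1 : Matrix (Fin (n + 1)) (Fin (n + 1)) ℝ)).det = 0) ∧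
    (∃ lam : Fin (n + 1) → ℝ, StrictMono lam ∧ lam (Fin.last n) = 1 ∧
      ∀ k, (Qmat p q - lam k • (1 : Matrix (Fin (n + 1)) (Fin (n + 1)) ℝ)).det = 0) := by
  haveI : Nonempty (Fin n) := ⟨⟨0, by omega⟩⟩
  have i0 : Fin n := ⟨0, by omega⟩
  -- we use inline indices below
  have hqnn : ∀ i : Fin n, 0 ≤ q i := by
    intro i
    rcases eq_or_lt_of_le (show (i : ℕ) ≤ n - 1 by omega) with h | h
    · have hi : i = (⟨n - 1, by omega⟩ : Fin n) := Fin.ext (by simpa using h)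
      rw [hi]; exact hq0
    · have hlt : i < (⟨n - 1, by omega⟩ : Fin n) := by
        simp only [Fin.lt_def]; simpa using h
      exact le_of_lt (lt_of_le_of_lt hq0 (hq i _ hlt))
  have hxle1 : ∀ i : Fin n, xx q i ≤ 1 := fun i => by
    have := hqnn i; unfold xx; linarith
  have hP : (0:ℝ) < ∑ i, p i := Finset.sum_pos (fun i _ => hp i) Finset.univ_nonempty
  choose r hr1 hr2 hr3 using root_between p q hp hq
  -- the leftmost root
  have hneg0 : ff p q (xx q ⟨0, by omega⟩) < 0 := by
    have h := ff_sign p q hp hq ⟨0, by omega⟩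
    rw [show (((⟨0, by omega⟩ : Fin n) : ℕ)) + 1 = 1 from rfl, pow_one] at h
    linarith
  have hpos0 : 0 < ff p q (xx q ⟨0, by omega⟩ - ∑ i, p i) := ff_pos_at_left p q hn hp hq
  have hab : xx q ⟨0, by omega⟩ - ∑ i, p i ≤ xx q ⟨0, by omega⟩ := by linarith
  obtain ⟨lam0, hmem, hf0⟩ := intermediate_value_Ioo' hab (ff_cont p q).continuousOn
    (Set.mem_Ioo.mpr ⟨hneg0, hpos0⟩)
  have hlam0a : xx q ⟨0, by omega⟩ - ∑ i, p i < lam0 := hmem.1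
  have hlam0b : lam0 < xx q ⟨0, by omega⟩ := hmem.2
  have hlam0far : lam0 < xx q ⟨n - 1, by omega⟩ - ∑ i, p i :=
    ff_far p q hn hp hq lam0 hf0 hlam0b
  refine ⟨?_, ?_, ?_, ?_⟩
  · rw [det_eq p q 1]; ring
  · intro i h
    exact ⟨r i h, hr1 i h, hr2 i h, by rw [det_eq p q (r i h), hr3 i h, mul_zero]⟩
  · exact ⟨lam0, hlam0a, lt_min hlam0b hlam0far,
      by rw [det_eq p q lam0, hf0, mul_zero]⟩
  · set lam : Fin (n + 1) → ℝ := fun k =>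
      Fin.cases (motive := fun _ => ℝ) lam0
        (fun i => if h : (i : ℕ) + 1 < n then r i h else 1) k with hlam
    have hsucc : ∀ i : Fin n, lam i.succ = if h : (i : ℕ) + 1 < n then r i h else 1 :=
      fun i => by simp [hlam]
    have h0 : lam 0 = lam0 := rfl
    have hlast : lam (Fin.last n) = 1 := by
      have hL : Fin.last n = (⟨n - 1, by omega⟩ : Fin n).succ := by
        simp [Fin.ext_iff]; omega
      rw [hL, hsucc, dif_neg (by simp; omega)]
    refine ⟨lam, ?_, hlast, ?_⟩
    · apply Fin.strictMono_iff_lt_succ.mpr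
      intro i
      rcases Nat.eq_zero_or_pos (i : ℕ) with hv | hv
      · have hi : i = (⟨0, by omega⟩ : Fin n) := Fin.ext (by simpa using hv)
        have hcs : i.castSucc = (0 : Fin (n + 1)) := by
          simp [Fin.ext_iff, hv]
        have hik : (i : ℕ) + 1 < n := by omega
        rw [hcs, h0, hsucc i, dif_pos hik]
        have h1 : xx q i < r i hik := hr1 i hik
        have h2 : lam0 < xx q i := by rw [hi]; exact hlam0b
        linarith
      · obtain ⟨m, hm⟩ : ∃ m, (i : ℕ) = m + 1 := ⟨(i : ℕ) - 1, by omega⟩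
        have hm1 : m + 1 < n := by omega
        have hcs : i.castSucc = (⟨m, by omega⟩ : Fin n).succ := by
          simp [Fin.ext_iff]; omega
        have heq : (⟨m + 1, hm1⟩ : Fin n) = i := Fin.ext (by simp; omega)
        have hup : r ⟨m, by omega⟩ hm1 < xx q i :=
          lt_of_lt_of_eq (hr2 ⟨m, by omega⟩ hm1) (congrArg (xx q) heq)
        rw [hcs, hsucc, dif_pos hm1, hsucc i]
        by_cases hik : (i : ℕ) + 1 < n
        · rw [dif_pos hik]
          exact hup.trans (hr1 i hik)
        · rw [dif_neg hik]
          exact hup.trans_le (hxle1 i)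
    · intro k
      rw [det_eq p q (lam k)]
      induction k using Fin.cases with
      | zero => rw [h0, hf0, mul_zero]
      | succ i =>
        rw [hsucc i]
        by_cases hik : (i : ℕ) + 1 < n
        · rw [dif_pos hik, hr3 i hik, mul_zero]
        · rw [dif_neg hik]; ring
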